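/- Let V : ℝ × ℝ → ℝ be twice continuously differentiable, write V_z, V_zz for partial derivatives in the first argument, and let δ > 0. Suppose Z₋, Z₊ : (λ₀−δ, λ₀+δ) → ℝ are continuous functions such that for every λ in this interval: Z₋(λ) < Z₊(λ), V_z(Z₋(λ), λ) = V_z(Z₊(λ), λ) = 0, V(Z₋(λ), λ) = V(Z₊(λ), λ), V(z, λ) < V(Z₋(λ), λ) for all z ∈ (Z₋(λ), Z₊(λ)), and V_zz(Z₋(λ), λ) < 0, V_zz(Z₊(λ), λ) < 0. Then for each λ ∈ (λ₀−δ, λ₀+δ) there is a strictly increasing solution ζ(λ) : ℝ → ℝ of ζ″ + V_z(ζ, λ) = 0 with ζ(λ)(x) → Z∓(λ) as x → ∓∞, normalized by ζ(λ)(0) = (Z₋(λ)+Z₊(λ))/2, and the map (λ, x) ↦ ζ(λ)(x) is continuous. Thus the heteroclinic fronts form a continuous local curve in the parameter λ. -/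

import Mathlib

open Filter Set

/-- Partial derivative of `V : ℝ × ℝ → ℝ` in its first argument. -/
noncomputable def Vz (V : ℝ × ℝ → ℝ) (z lam : ℝ) : ℝ := fderiv ℝ V (z, lam) (1, 0)

/-- Second partial derivative of `V : ℝ × ℝ → ℝ` in its first argument. -/
noncomputable def Vzz (V : ℝ × ℝ → ℝ) (z lam : ℝ) : ℝ :=
  fderiv ℝ (fun p : ℝ × ℝ => fderiv ℝ V p (1, 0)) (z, lam) (1, 0)

open intervalIntegral MeasureTheory


noncomputable def gW (W : ℝ → ℝ) (a : ℝ) (z : ℝ) : ℝ := 2 * (W a - W z)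

noncomputable def iW (W : ℝ → ℝ) (a : ℝ) (s : ℝ) : ℝ := (Real.sqrt (gW W a s))⁻¹

noncomputable def TW (W : ℝ → ℝ) (a b : ℝ) (z : ℝ) : ℝ := ∫ s in ((a+b)/2)..z, iW W a s


lemma cd2_parts {g : ℝ → ℝ} (hg : ContDiff ℝ 2 g) :
    Differentiable ℝ g ∧ Differentiable ℝ (deriv g) ∧ Continuous (deriv (deriv g)) := by
  rw [show (2 : WithTop ℕ∞) = 1 + 1 from by norm_num, contDiff_succ_iff_deriv] at hg
  obtain ⟨h1, -, h2⟩ := hg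
  rw [contDiff_one_iff_deriv] at h2
  exact ⟨h1, h2.1, h2.2⟩

lemma cd2_of_parts {g : ℝ → ℝ} (h1 : Differentiable ℝ g) (h2 : Differentiable ℝ (deriv g))
    (h3 : Continuous (deriv (deriv g))) : ContDiff ℝ 2 g := by
  rw [show (2 : WithTop ℕ∞) = 1 + 1 from by norm_num, contDiff_succ_iff_deriv]
  exact ⟨h1, by simp, contDiff_one_iff_deriv.mpr ⟨h2, h3⟩⟩

lemma quad_bound_right {g : ℝ → ℝ} {b r K : ℝ} (hg : ContDiff ℝ 2 g) (hr : 0 < r)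
    (hgb : g b = 0) (hg'b : deriv g b = 0)
    (hK : ∀ s ∈ Icc (b - r) b, deriv (deriv g) s ≤ 2 * K) :
    ∀ s ∈ Icc (b - r) b, g s ≤ K * (b - s) ^ 2 := by
  obtain ⟨hd1, hd2, hc2⟩ := cd2_parts hg
  set φ : ℝ → ℝ := fun s => K * (b - s) ^ 2 - g s with hφ
  set p : ℝ → ℝ := fun s => -(2 * K) * (b - s) - deriv g s with hpdef
  have hsq : ∀ s : ℝ, HasDerivAt (fun s => K * (b - s) ^ 2) (-(2 * K) * (b - s)) s := by
    intro s
    have h0 : HasDerivAt (fun s : ℝ => b - s) (0 - 1) s :=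
      (hasDerivAt_const s b).sub (hasDerivAt_id s)
    have h1 := (h0.pow 2).const_mul K
    exact h1.congr_deriv (by ring)
  have hp : ∀ s, HasDerivAt φ (p s) s := fun s => (hsq s).sub (hd1 s).hasDerivAt
  have hp' : ∀ s, HasDerivAt p (2 * K - deriv (deriv g) s) s := by
    intro s
    have h0 : HasDerivAt (fun s : ℝ => -(2 * K) * (b - s)) (-(2 * K) * (0 - 1)) s :=
      ((hasDerivAt_const s b).sub (hasDerivAt_id s)).const_mul _
    have := h0.sub (hd2 s).hasDerivAt
    exact this.congr_deriv (by ring)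
  have hpcont : Continuous p := by
    apply Continuous.sub
    · exact continuous_const.mul (continuous_const.sub continuous_id)
    · exact hd2.continuous
  have hmono : MonotoneOn p (Icc (b - r) b) := by
    apply monotoneOn_of_deriv_nonneg (convex_Icc _ _) hpcont.continuousOn
      (fun s _ => ((hp' s).differentiableAt).differentiableWithinAt)
    intro s hs
    rw [interior_Icc] at hs
    rw [(hp' s).deriv]
    have := hK s ⟨hs.1.le, hs.2.le⟩
    linarith
  have hpb : p b = 0 := by simp [hpdef, hg'b]
  have hple : ∀ s ∈ Icc (b - r) b, p s ≤ 0 := by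
    intro s hs
    have := hmono hs (by constructor <;> linarith [hr] : b ∈ Icc (b - r) b) hs.2
    rw [hpb] at this; exact this
  have hanti : AntitoneOn φ (Icc (b - r) b) := by
    apply antitoneOn_of_deriv_nonpos (convex_Icc _ _)
      (Continuous.continuousOn (by exact ((continuous_const.mul
        ((continuous_const.sub continuous_id).pow 2)).sub hd1.continuous)))
      (fun s _ => ((hp s).differentiableAt).differentiableWithinAt)
    intro s hs
    rw [interior_Icc] at hs
    rw [(hp s).deriv]
    exact hple s ⟨hs.1.le, hs.2.le⟩
  intro s hs
  have := hanti hs (by constructor <;> linarith [hr] : b ∈ Icc (b - r) b) hs.2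
  have hφb : φ b = 0 := by simp [hφ, hgb]
  rw [hφb] at this
  simp only [hφ] at this
  linarith

lemma quad_bound_left {g : ℝ → ℝ} {a r K : ℝ} (hg : ContDiff ℝ 2 g) (hr : 0 < r)
    (hga : g a = 0) (hg'a : deriv g a = 0)
    (hK : ∀ s ∈ Icc a (a + r), deriv (deriv g) s ≤ 2 * K) :
    ∀ s ∈ Icc a (a + r), g s ≤ K * (s - a) ^ 2 := by
  obtain ⟨hd1, hd2, hc2⟩ := cd2_parts hg
  set φ : ℝ → ℝ := fun s => K * (s - a) ^ 2 - g s with hφ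
  set p : ℝ → ℝ := fun s => (2 * K) * (s - a) - deriv g s with hpdef
  have hsq : ∀ s : ℝ, HasDerivAt (fun s => K * (s - a) ^ 2) ((2 * K) * (s - a)) s := by
    intro s
    have h0 : HasDerivAt (fun s : ℝ => s - a) (1 - 0) s :=
      (hasDerivAt_id s).sub (hasDerivAt_const s a)
    have h1 := (h0.pow 2).const_mul K
    exact h1.congr_deriv (by ring)
  have hp : ∀ s, HasDerivAt φ (p s) s := fun s => (hsq s).sub (hd1 s).hasDerivAt
  have hp' : ∀ s, HasDerivAt p (2 * K - deriv (deriv g) s) s := by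
    intro s
    have h0 : HasDerivAt (fun s : ℝ => (2 * K) * (s - a)) ((2 * K) * (1 - 0)) s :=
      ((hasDerivAt_id s).sub (hasDerivAt_const s a)).const_mul _
    have := h0.sub (hd2 s).hasDerivAt
    exact this.congr_deriv (by ring)
  have hpcont : Continuous p := by
    apply Continuous.sub
    · exact continuous_const.mul (continuous_id.sub continuous_const)
    · exact hd2.continuous
  have hmono : MonotoneOn p (Icc a (a + r)) := by
    apply monotoneOn_of_deriv_nonneg (convex_Icc _ _) hpcont.continuousOn
      (fun s _ => ((hp' s).differentiableAt).differentiableWithinAt)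
    intro s hs
    rw [interior_Icc] at hs
    rw [(hp' s).deriv]
    have := hK s ⟨hs.1.le, hs.2.le⟩
    linarith
  have hpa : p a = 0 := by simp [hpdef, hg'a]
  have hpge : ∀ s ∈ Icc a (a + r), 0 ≤ p s := by
    intro s hs
    have := hmono (by constructor <;> linarith [hr] : a ∈ Icc a (a + r)) hs hs.1
    rw [hpa] at this; exact this
  have hmo : MonotoneOn φ (Icc a (a + r)) := by
    apply monotoneOn_of_deriv_nonneg (convex_Icc _ _)
      (Continuous.continuousOn (by exact ((continuous_const.mul
        ((continuous_id.sub continuous_const).pow 2)).sub hd1.continuous)))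
      (fun s _ => ((hp s).differentiableAt).differentiableWithinAt)
    intro s hs
    rw [interior_Icc] at hs
    rw [(hp s).deriv]
    exact hpge s ⟨hs.1.le, hs.2.le⟩
  intro s hs
  have := hmo (by constructor <;> linarith [hr] : a ∈ Icc a (a + r)) hs hs.1
  have hφa : φ a = 0 := by simp [hφ, hga]
  rw [hφa] at this
  simp only [hφ] at this
  linarith

lemma tendsto_T_atTop_aux {f : ℝ → ℝ} {mid b r K : ℝ} (hK : 0 < K) (hr : 0 < r)
    (hmb : mid ≤ b - r)
    (hcont : ContinuousOn f (Ico mid b))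
    (hbound : ∀ s ∈ Ico (b - r) b, (Real.sqrt K * (b - s))⁻¹ ≤ f s) :
    Tendsto (fun z => ∫ s in mid..z, f s) (nhdsWithin b (Iio b)) atTop := by
  have hrb : b - r < b := by linarith
  have hsK : 0 < Real.sqrt K := Real.sqrt_pos.2 hK
  set C := ∫ s in mid..(b - r), f s with hC
  have key : ∀ z ∈ Ioo (b - r) b,
      C + (Real.sqrt K)⁻¹ * (Real.log r - Real.log (b - z)) ≤ ∫ s in mid..z, f s := by
    intro z hz
    have hint1 : IntervalIntegrable f volume mid (b - r) := by
      apply (hcont.mono _).intervalIntegrable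
      rw [uIcc_of_le hmb]
      exact fun s hs => ⟨hs.1, lt_of_le_of_lt hs.2 hrb⟩
    have hint2 : IntervalIntegrable f volume (b - r) z := by
      apply (hcont.mono _).intervalIntegrable
      rw [uIcc_of_le hz.1.le]
      exact fun s hs => ⟨le_trans hmb hs.1, lt_of_le_of_lt hs.2 hz.2⟩
    have hsplit : (∫ s in mid..z, f s) = C + ∫ s in (b - r)..z, f s := by
      rw [hC, intervalIntegral.integral_add_adjacent_intervals hint1 hint2]
    have hintg0 : IntervalIntegrable (fun s => (Real.sqrt K * (b - s))⁻¹) volume (b - r) z := by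
      apply ContinuousOn.intervalIntegrable
      apply ContinuousOn.inv₀
      · exact (continuous_const.mul (continuous_const.sub continuous_id)).continuousOn
      · intro s hs
        rw [uIcc_of_le hz.1.le] at hs
        have : 0 < b - s := by have := hs.2; have := hz.2; linarith
        positivity
    have hmono : (∫ s in (b - r)..z, (Real.sqrt K * (b - s))⁻¹) ≤ ∫ s in (b - r)..z, f s := by
      apply intervalIntegral.integral_mono_on hz.1.le hintg0 hint2
      intro s hs
      exact hbound s ⟨hs.1, lt_of_le_of_lt hs.2 hz.2⟩
    have hcomp : (∫ s in (b - r)..z, (Real.sqrt K * (b - s))⁻¹)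
        = (Real.sqrt K)⁻¹ * (Real.log r - Real.log (b - z)) := by
      have e1 : ∀ s : ℝ, (Real.sqrt K * (b - s))⁻¹ = (Real.sqrt K)⁻¹ * (b - s)⁻¹ := by
        intro s; rw [mul_inv]
      simp_rw [e1]
      rw [intervalIntegral.integral_const_mul]
      have e2 : (∫ s in (b - r)..z, (b - s)⁻¹) = ∫ s in (b - z)..(b - (b - r)), s⁻¹ := by
        exact intervalIntegral.integral_comp_sub_left (fun s => s⁻¹) b
      rw [e2, sub_sub_cancel]
      rw [integral_inv]
      · rw [Real.log_div (ne_of_gt hr) (by have := hz.2; intro hcon; nlinarith [hz.2])]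
      · rw [uIcc_of_le (by linarith [hz.1, hz.2] : b - z ≤ r)]
        intro hmem
        have := hmem.1
        have hbz : 0 < b - z := by linarith [hz.2]
        linarith
    rw [hsplit, ← hcomp]
    linarith
  have hφ : Tendsto (fun z => C + (Real.sqrt K)⁻¹ * (Real.log r - Real.log (b - z)))
      (nhdsWithin b (Iio b)) atTop := by
    apply tendsto_atTop_add_const_left
    apply Tendsto.const_mul_atTop (inv_pos.2 hsK)
    have h1 : Tendsto (fun z : ℝ => b - z) (nhdsWithin b (Iio b)) (nhdsWithin 0 (Ioi 0)) := by
      apply tendsto_nhdsWithin_of_tendsto_nhds_of_eventually_within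
      · have : Tendsto (fun z : ℝ => b - z) (nhds b) (nhds (b - b)) :=
          (continuous_const.sub continuous_id).tendsto b
        rw [sub_self] at this
        exact this.mono_left nhdsWithin_le_nhds
      · filter_upwards [self_mem_nhdsWithin] with z hz
        simp only [mem_Iio] at hz
        simp only [mem_Ioi]; linarith
    have h2 : Tendsto (fun z : ℝ => Real.log (b - z)) (nhdsWithin b (Iio b)) atBot :=
      Real.tendsto_log_nhdsGT_zero.comp h1
    have h3 := tendsto_neg_atBot_atTop.comp h2
    have h4 := tendsto_atTop_add_const_left _ (Real.log r) h3
    simpa [Function.comp, sub_eq_add_neg] using h4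
  apply tendsto_atTop_mono' _ _ hφ
  filter_upwards [Ioo_mem_nhdsLT_of_mem (⟨hrb, le_refl b⟩ : b ∈ Ioc (b - r) b)] with z hz
  exact key z hz

lemma tendsto_T_atBot_aux {f : ℝ → ℝ} {mid a r K : ℝ} (hK : 0 < K) (hr : 0 < r)
    (hma : a + r ≤ mid)
    (hcont : ContinuousOn f (Ioc a mid))
    (hbound : ∀ s ∈ Ioc a (a + r), (Real.sqrt K * (s - a))⁻¹ ≤ f s) :
    Tendsto (fun z => ∫ s in mid..z, f s) (nhdsWithin a (Ioi a)) atBot := by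
  have hra : a < a + r := by linarith
  have hsK : 0 < Real.sqrt K := Real.sqrt_pos.2 hK
  set C := ∫ s in (a + r)..mid, f s with hC
  have key : ∀ z ∈ Ioo a (a + r),
      (∫ s in mid..z, f s) ≤ -C - (Real.sqrt K)⁻¹ * (Real.log r - Real.log (z - a)) := by
    intro z hz
    have hint1 : IntervalIntegrable f volume (a + r) mid := by
      apply (hcont.mono _).intervalIntegrable
      rw [uIcc_of_le hma]
      exact fun s hs => ⟨lt_of_lt_of_le hra hs.1, hs.2⟩
    have hint2 : IntervalIntegrable f volume z (a + r) := by
      apply (hcont.mono _).intervalIntegrable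
      rw [uIcc_of_le hz.2.le]
      exact fun s hs => ⟨lt_of_lt_of_le hz.1 hs.1, le_trans hs.2 hma⟩
    have hsplit : (∫ s in mid..z, f s) = -((∫ s in z..(a + r), f s) + C) := by
      rw [hC, intervalIntegral.integral_add_adjacent_intervals hint2 hint1,
        intervalIntegral.integral_symm]
    have hintg0 : IntervalIntegrable (fun s => (Real.sqrt K * (s - a))⁻¹) volume z (a + r) := by
      apply ContinuousOn.intervalIntegrable
      apply ContinuousOn.inv₀
      · exact (continuous_const.mul (continuous_id.sub continuous_const)).continuousOn
      · intro s hs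
        rw [uIcc_of_le hz.2.le] at hs
        have : 0 < s - a := by have := hs.1; have := hz.1; linarith
        positivity
    have hmono : (∫ s in z..(a + r), (Real.sqrt K * (s - a))⁻¹) ≤ ∫ s in z..(a + r), f s := by
      apply intervalIntegral.integral_mono_on hz.2.le hintg0 hint2
      intro s hs
      exact hbound s ⟨lt_of_lt_of_le hz.1 hs.1, hs.2⟩
    have hcomp : (∫ s in z..(a + r), (Real.sqrt K * (s - a))⁻¹)
        = (Real.sqrt K)⁻¹ * (Real.log r - Real.log (z - a)) := by
      have e1 : ∀ s : ℝ, (Real.sqrt K * (s - a))⁻¹ = (Real.sqrt K)⁻¹ * (s - a)⁻¹ := by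
        intro s; rw [mul_inv]
      simp_rw [e1]
      rw [intervalIntegral.integral_const_mul]
      have e2 : (∫ s in z..(a + r), (s - a)⁻¹) = ∫ s in (z - a)..(a + r - a), s⁻¹ :=
        intervalIntegral.integral_comp_sub_right (fun s => s⁻¹) a
      rw [e2, add_sub_cancel_left]
      rw [integral_inv]
      · rw [Real.log_div (ne_of_gt hr) (by have := hz.1; intro hcon; linarith [(sub_pos.2 hz.1)])]
      · rw [uIcc_of_le (by linarith [hz.1, hz.2] : z - a ≤ r)]
        intro hmem
        have := hmem.1
        have hza : 0 < z - a := sub_pos.2 hz.1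
        linarith
    rw [hsplit, ← hcomp]
    linarith
  have hφ : Tendsto (fun z => -C - (Real.sqrt K)⁻¹ * (Real.log r - Real.log (z - a)))
      (nhdsWithin a (Ioi a)) atBot := by
    have h1 : Tendsto (fun z : ℝ => z - a) (nhdsWithin a (Ioi a)) (nhdsWithin 0 (Ioi 0)) := by
      apply tendsto_nhdsWithin_of_tendsto_nhds_of_eventually_within
      · have : Tendsto (fun z : ℝ => z - a) (nhds a) (nhds (a - a)) :=
          (continuous_id.sub continuous_const).tendsto a
        rw [sub_self] at this
        exact this.mono_left nhdsWithin_le_nhds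
      · filter_upwards [self_mem_nhdsWithin] with z hz
        simp only [mem_Ioi] at hz ⊢; linarith
    have h2 : Tendsto (fun z : ℝ => Real.log (z - a)) (nhdsWithin a (Ioi a)) atBot :=
      Real.tendsto_log_nhdsGT_zero.comp h1
    have h3 : Tendsto (fun z : ℝ => Real.log r - Real.log (z - a))
        (nhdsWithin a (Ioi a)) atTop := by
      have := tendsto_atTop_add_const_left _ (Real.log r) (tendsto_neg_atBot_atTop.comp h2)
      simpa [Function.comp, sub_eq_add_neg] using this
    have h4 : Tendsto (fun z : ℝ => (Real.sqrt K)⁻¹ * (Real.log r - Real.log (z - a)))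
        (nhdsWithin a (Ioi a)) atTop := Tendsto.const_mul_atTop (inv_pos.2 hsK) h3
    have h5 := tendsto_neg_atTop_atBot.comp h4
    have h6 := tendsto_atBot_add_const_left _ (-C) h5
    simpa [Function.comp, sub_eq_add_neg] using h6
  apply tendsto_atBot_mono' _ _ hφ
  filter_upwards [Ioo_mem_nhdsGT_of_mem (⟨le_refl a, hra⟩ : a ∈ Ico a (a + r))] with z hz
  exact key z hz

open Classical in
noncomputable def zW (W : ℝ → ℝ) (a b : ℝ) (x : ℝ) : ℝ :=
  if h : ∃ z, z ∈ Set.Ioo a b ∧ TW W a b z = x then h.choose else (a + b) / 2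

structure GoodW (W : ℝ → ℝ) (a b : ℝ) : Prop where
  smooth : ContDiff ℝ 2 W
  hab : a < b
  d1a : deriv W a = 0
  d1b : deriv W b = 0
  conj : W a = W b
  well : ∀ z ∈ Set.Ioo a b, W z < W a
  d2a : deriv (deriv W) a < 0
  d2b : deriv (deriv W) b < 0

namespace GoodW
variable {W : ℝ → ℝ} {a b : ℝ} (h : GoodW W a b)
include h

lemma mid_mem : (a+b)/2 ∈ Ioo a b := ⟨by linarith [h.hab], by linarith [h.hab]⟩

lemma gpos : ∀ z ∈ Ioo a b, 0 < gW W a z := fun z hz => by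
  have := h.well z hz; unfold gW; linarith

lemma gcont : Continuous (gW W a) :=
  continuous_const.mul (continuous_const.sub h.smooth.continuous)

lemma icont : ContinuousOn (iW W a) (Ioo a b) :=
  ContinuousOn.inv₀ (Real.continuous_sqrt.comp_continuousOn h.gcont.continuousOn)
    (fun z hz => ne_of_gt (Real.sqrt_pos.2 (h.gpos z hz)))

lemma ipos : ∀ z ∈ Ioo a b, 0 < iW W a z := fun z hz =>
  inv_pos.2 (Real.sqrt_pos.2 (h.gpos z hz))

lemma integrable : ∀ z ∈ Ioo a b, ∀ w ∈ Ioo a b,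
    IntervalIntegrable (iW W a) volume z w := fun z hz w hw =>
  (h.icont.mono (Set.ordConnected_Ioo.uIcc_subset hz hw)).intervalIntegrable

lemma hasDerivAtT : ∀ z ∈ Ioo a b, HasDerivAt (TW W a b) (iW W a z) z := fun z hz =>
  intervalIntegral.integral_hasDerivAt_right (h.integrable _ h.mid_mem _ hz)
    (ContinuousOn.stronglyMeasurableAtFilter isOpen_Ioo h.icont z hz)
    (h.icont.continuousAt (isOpen_Ioo.mem_nhds hz))

lemma T_sub : ∀ z ∈ Ioo a b, ∀ w ∈ Ioo a b,
    TW W a b w - TW W a b z = ∫ s in z..w, iW W a s := fun z hz w hw => by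
  have := intervalIntegral.integral_add_adjacent_intervals
    (h.integrable _ h.mid_mem _ hz) (h.integrable _ hz _ hw)
  unfold TW; linarith

lemma strictMonoOnT : StrictMonoOn (TW W a b) (Ioo a b) := by
  intro z hz w hw hzw
  have hsub := h.T_sub z hz w hw
  have hpos : 0 < ∫ s in z..w, iW W a s :=
    intervalIntegral.intervalIntegral_pos_of_pos_on (h.integrable _ hz _ hw)
      (fun s hs => h.ipos s ⟨lt_trans hz.1 hs.1, lt_trans hs.2 hw.2⟩) hzw
  linarith

omit h in
lemma gW_hasDeriv (hW : Differentiable ℝ W) (z : ℝ) :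
    HasDerivAt (gW W a) (-2 * deriv W z) z := by
  have h0 : HasDerivAt (fun z => W a - W z) (0 - deriv W z) z :=
    (hasDerivAt_const z (W a)).sub (hW z).hasDerivAt
  have := h0.const_mul (2 : ℝ)
  exact this.congr_deriv (by ring)

omit h in
lemma gW_deriv (hW : Differentiable ℝ W) :
    deriv (gW W a) = fun z => -2 * deriv W z :=
  funext fun z => (gW_hasDeriv hW z).deriv

omit h in
lemma gW_deriv2 (hW : Differentiable ℝ W) (hW2 : Differentiable ℝ (deriv W)) (z : ℝ) :
    deriv (deriv (gW W a)) z = -2 * deriv (deriv W) z := by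
  rw [gW_deriv (a := a) hW]
  exact (((hW2 z).hasDerivAt).const_mul (-2 : ℝ)).deriv

lemma gW_contDiff : ContDiff ℝ 2 (gW W a) :=
  contDiff_const.mul (contDiff_const.sub h.smooth)

lemma Ttop : Tendsto (TW W a b) (nhdsWithin b (Iio b)) atTop := by
  obtain ⟨hd1, hd2, hc2⟩ := cd2_parts h.smooth
  set K := -2 * deriv (deriv W) b with hKdef
  have hK : 0 < K := by have := h.d2b; rw [hKdef]; linarith
  have hg2 : ∀ z, deriv (deriv (gW W a)) z = -2 * deriv (deriv W) z :=
    gW_deriv2 hd1 hd2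
  have hcont2 : Continuous (deriv (deriv (gW W a))) := by
    have : deriv (deriv (gW W a)) = fun z => -2 * deriv (deriv W) z := funext hg2
    rw [this]
    exact continuous_const.mul hc2
  have hev : ∀ᶠ s in nhds b, deriv (deriv (gW W a)) s < 2 * K := by
    apply hcont2.continuousAt.eventually_lt continuousAt_const
    rw [hg2 b]; linarith
  obtain ⟨ε, hε, hball⟩ := Metric.eventually_nhds_iff.mp hev
  have hmidb : (a + b) / 2 < b := h.mid_mem.2
  set r := min (ε / 2) ((b - (a + b) / 2) / 2) with hrdef
  have hr : 0 < r := lt_min (by linarith) (by linarith)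
  have hrmb : (a + b) / 2 ≤ b - r := by
    have : r ≤ (b - (a + b) / 2) / 2 := min_le_right _ _
    linarith
  have hKbound : ∀ s ∈ Icc (b - r) b, deriv (deriv (gW W a)) s ≤ 2 * K := by
    intro s hs
    have : dist s b < ε := by
      rw [Real.dist_eq, abs_sub_lt_iff]
      have h1 : r ≤ ε / 2 := min_le_left _ _
      constructor <;> [linarith [hs.2]; linarith [hs.1]]
    exact (hball this).le
  have hgb : gW W a b = 0 := by unfold gW; rw [h.conj]; ring
  have hg'b : deriv (gW W a) b = 0 := by
    rw [gW_deriv (a := a) hd1]; simp only []; rw [h.d1b]; ring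
  have quad := quad_bound_right h.gW_contDiff hr hgb hg'b hKbound
  have hbound : ∀ s ∈ Ico (b - r) b, (Real.sqrt K * (b - s))⁻¹ ≤ iW W a s := by
    intro s hs
    have hsab : s ∈ Ioo a b := ⟨by linarith [hs.1, h.mid_mem.1], hs.2⟩
    have hgs : 0 < gW W a s := h.gpos s hsab
    have hbs : (0 : ℝ) ≤ b - s := by linarith [hs.2.le]
    have h1 : Real.sqrt (gW W a s) ≤ Real.sqrt K * (b - s) := by
      have h2 := Real.sqrt_le_sqrt (quad s ⟨hs.1, hs.2.le⟩)
      rwa [Real.sqrt_mul hK.le, Real.sqrt_sq hbs] at h2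
    unfold iW
    exact inv_anti₀ (Real.sqrt_pos.2 hgs) h1
  exact tendsto_T_atTop_aux hK hr hrmb
    (h.icont.mono (fun s hs => ⟨lt_of_lt_of_le h.mid_mem.1 hs.1, hs.2⟩)) hbound

lemma Tbot : Tendsto (TW W a b) (nhdsWithin a (Ioi a)) atBot := by
  obtain ⟨hd1, hd2, hc2⟩ := cd2_parts h.smooth
  set K := -2 * deriv (deriv W) a with hKdef
  have hK : 0 < K := by have := h.d2a; rw [hKdef]; linarith
  have hg2 : ∀ z, deriv (deriv (gW W a)) z = -2 * deriv (deriv W) z :=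
    gW_deriv2 hd1 hd2
  have hcont2 : Continuous (deriv (deriv (gW W a))) := by
    have : deriv (deriv (gW W a)) = fun z => -2 * deriv (deriv W) z := funext hg2
    rw [this]
    exact continuous_const.mul hc2
  have hev : ∀ᶠ s in nhds a, deriv (deriv (gW W a)) s < 2 * K := by
    apply hcont2.continuousAt.eventually_lt continuousAt_const
    rw [hg2 a]; linarith
  obtain ⟨ε, hε, hball⟩ := Metric.eventually_nhds_iff.mp hev
  have hmida : a < (a + b) / 2 := h.mid_mem.1
  set r := min (ε / 2) (((a + b) / 2 - a) / 2) with hrdef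
  have hr : 0 < r := lt_min (by linarith) (by linarith)
  have hrma : a + r ≤ (a + b) / 2 := by
    have : r ≤ ((a + b) / 2 - a) / 2 := min_le_right _ _
    linarith
  have hKbound : ∀ s ∈ Icc a (a + r), deriv (deriv (gW W a)) s ≤ 2 * K := by
    intro s hs
    have : dist s a < ε := by
      rw [Real.dist_eq, abs_sub_lt_iff]
      have h1 : r ≤ ε / 2 := min_le_left _ _
      constructor <;> [linarith [hs.2]; linarith [hs.1]]
    exact (hball this).le
  have hga : gW W a a = 0 := by unfold gW; ring
  have hg'a : deriv (gW W a) a = 0 := by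
    rw [gW_deriv (a := a) hd1]; simp only []; rw [h.d1a]; ring
  have quad := quad_bound_left h.gW_contDiff hr hga hg'a hKbound
  have hbound : ∀ s ∈ Ioc a (a + r), (Real.sqrt K * (s - a))⁻¹ ≤ iW W a s := by
    intro s hs
    have hsab : s ∈ Ioo a b := ⟨hs.1, by linarith [hs.2, h.mid_mem.2]⟩
    have hgs : 0 < gW W a s := h.gpos s hsab
    have hsa : (0 : ℝ) ≤ s - a := by linarith [hs.1.le]
    have h1 : Real.sqrt (gW W a s) ≤ Real.sqrt K * (s - a) := by
      have h2 := Real.sqrt_le_sqrt (quad s ⟨hs.1.le, hs.2⟩)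
      rwa [Real.sqrt_mul hK.le, Real.sqrt_sq hsa] at h2
    unfold iW
    exact inv_anti₀ (Real.sqrt_pos.2 hgs) h1
  exact tendsto_T_atBot_aux hK hr hrma
    (h.icont.mono (fun s hs => ⟨hs.1, lt_of_le_of_lt hs.2 h.mid_mem.2⟩)) hbound

lemma TcontOn : ContinuousOn (TW W a b) (Ioo a b) :=
  fun z hz => ((h.hasDerivAtT z hz).continuousAt).continuousWithinAt

lemma surj : ∀ x : ℝ, ∃ z ∈ Ioo a b, TW W a b z = x := by
  intro x
  obtain ⟨z₂, hTz₂, hz₂⟩ := ((h.Ttop.eventually_gt_atTop x).and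
    (eventually_of_mem (Ioo_mem_nhdsLT_of_mem ⟨h.hab, le_refl b⟩) (fun z hz => hz))).exists
  obtain ⟨z₁, hTz₁, hz₁⟩ := ((h.Tbot.eventually_lt_atBot x).and
    (eventually_of_mem (Ioo_mem_nhdsGT_of_mem ⟨le_refl a, h.hab⟩) (fun z hz => hz))).exists
  have h12 : z₁ < z₂ := by
    by_contra hcon
    push_neg at hcon
    have := h.strictMonoOnT.monotoneOn hz₂ hz₁ hcon
    linarith
  have hsub : Icc z₁ z₂ ⊆ Ioo a b := fun s hs =>
    ⟨lt_of_lt_of_le hz₁.1 hs.1, lt_of_le_of_lt hs.2 hz₂.2⟩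
  have := intermediate_value_Icc h12.le (h.TcontOn.mono hsub)
  have hx : x ∈ Icc (TW W a b z₁) (TW W a b z₂) := ⟨hTz₁.le, hTz₂.le⟩
  obtain ⟨z, hz, hTz⟩ := this hx
  exact ⟨z, hsub hz, hTz⟩

lemma zW_spec (x : ℝ) : zW W a b x ∈ Ioo a b ∧ TW W a b (zW W a b x) = x := by
  obtain ⟨z, hz, hT⟩ := h.surj x
  have h' : ∃ z, z ∈ Set.Ioo a b ∧ TW W a b z = x := ⟨z, hz, hT⟩
  rw [zW, dif_pos h']
  exact h'.choose_spec

lemma zW_eq {z x : ℝ} (hz : z ∈ Ioo a b) (hT : TW W a b z = x) : zW W a b x = z :=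
  h.strictMonoOnT.injOn (h.zW_spec x).1 hz (by rw [(h.zW_spec x).2, hT])

lemma zW_mem (x : ℝ) : zW W a b x ∈ Ioo a b := (h.zW_spec x).1

lemma zW_strictMono : StrictMono (zW W a b) := by
  intro x y hxy
  have hx := h.zW_spec x
  have hy := h.zW_spec y
  have hiff := h.strictMonoOnT.lt_iff_lt hx.1 hy.1
  rw [hx.2, hy.2] at hiff
  exact hiff.mp hxy

lemma zW_zero : zW W a b 0 = (a + b) / 2 :=
  h.zW_eq h.mid_mem (by rw [TW, intervalIntegral.integral_same])

lemma zW_continuous : Continuous (zW W a b) := by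
  rw [continuous_iff_continuousAt]
  intro x
  apply tendsto_order.2
  constructor
  · intro c hc
    have hz0 := h.zW_spec x
    set z0 := zW W a b x
    set z₁ := max c ((a + z0) / 2) with hz₁def
    have hmid : (a + z0) / 2 ∈ Ioo a z0 := ⟨by linarith [hz0.1.1], by linarith [hz0.1.1]⟩
    have hz₁ : z₁ ∈ Ioo a z0 :=
      ⟨lt_of_lt_of_le hmid.1 (le_max_right _ _), max_lt hc hmid.2⟩
    have hz₁' : z₁ ∈ Ioo a b := ⟨hz₁.1, lt_trans hz₁.2 hz0.1.2⟩
    have hT₁ : TW W a b z₁ < x := by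
      have := h.strictMonoOnT hz₁' hz0.1 hz₁.2
      rwa [hz0.2] at this
    filter_upwards [Ioi_mem_nhds hT₁] with y hy
    have hyspec := h.zW_spec y
    have hlt : z₁ < zW W a b y := by
      have hiff := h.strictMonoOnT.lt_iff_lt hz₁' hyspec.1
      rw [hyspec.2] at hiff
      exact hiff.mp hy
    exact lt_of_le_of_lt (le_max_left _ _) hlt
  · intro c hc
    have hz0 := h.zW_spec x
    set z0 := zW W a b x
    set z₂ := min c ((z0 + b) / 2) with hz₂def
    have hmid : (z0 + b) / 2 ∈ Ioo z0 b := ⟨by linarith [hz0.1.2], by linarith [hz0.1.2]⟩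
    have hz₂ : z₂ ∈ Ioo z0 b :=
      ⟨lt_min hc hmid.1, lt_of_le_of_lt (min_le_right _ _) hmid.2⟩
    have hz₂' : z₂ ∈ Ioo a b := ⟨lt_trans hz0.1.1 hz₂.1, hz₂.2⟩
    have hT₂ : x < TW W a b z₂ := by
      have := h.strictMonoOnT hz0.1 hz₂' hz₂.1
      rwa [hz0.2] at this
    filter_upwards [Iio_mem_nhds hT₂] with y hy
    have hyspec := h.zW_spec y
    have hlt : zW W a b y < z₂ := by
      have hiff := h.strictMonoOnT.lt_iff_lt hyspec.1 hz₂'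
      rw [hyspec.2] at hiff
      exact hiff.mp hy
    exact lt_of_lt_of_le hlt (min_le_left _ _)

lemma zW_hasDeriv (x : ℝ) :
    HasDerivAt (zW W a b) (Real.sqrt (gW W a (zW W a b x))) x := by
  have hz := h.zW_spec x
  have hT : HasDerivAt (TW W a b) (iW W a (zW W a b x)) (zW W a b x) :=
    h.hasDerivAtT _ hz.1
  have hne : iW W a (zW W a b x) ≠ 0 := ne_of_gt (h.ipos _ hz.1)
  have hloc : ∀ᶠ y in nhds x, TW W a b (zW W a b y) = y := by
    filter_upwards with y
    exact (h.zW_spec y).2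
  have := HasDerivAt.of_local_left_inverse h.zW_continuous.continuousAt hT hne hloc
  rwa [iW, inv_inv] at this

lemma zW_hasDeriv2 (x : ℝ) :
    HasDerivAt (fun y => Real.sqrt (gW W a (zW W a b y)))
      (-(deriv W (zW W a b x))) x := by
  obtain ⟨hd1, hd2, hc2⟩ := cd2_parts h.smooth
  have hz := h.zW_spec x
  set z0 := zW W a b x with hz0def
  have hgz : 0 < gW W a z0 := h.gpos _ hz.1
  have h1 : HasDerivAt (gW W a) (-2 * deriv W z0) z0 := gW_hasDeriv hd1 z0
  have h2 : HasDerivAt (zW W a b) (Real.sqrt (gW W a z0)) x := h.zW_hasDeriv x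
  have h3 : HasDerivAt Real.sqrt (1 / (2 * Real.sqrt (gW W a z0))) (gW W a z0) :=
    Real.hasDerivAt_sqrt (ne_of_gt hgz)
  have h4 := h3.comp x (h1.comp x h2)
  have hs : Real.sqrt (gW W a z0) ≠ 0 := ne_of_gt (Real.sqrt_pos.2 hgz)
  refine h4.congr_deriv ?_
  field_simp

lemma zW_ode (x : ℝ) :
    deriv (deriv (zW W a b)) x = -(deriv W (zW W a b x)) := by
  have : deriv (zW W a b) = fun x => Real.sqrt (gW W a (zW W a b x)) :=
    funext fun x => (h.zW_hasDeriv x).deriv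
  rw [this]
  exact (h.zW_hasDeriv2 x).deriv

lemma zW_contDiff : ContDiff ℝ 2 (zW W a b) := by
  obtain ⟨hd1, hd2, hc2⟩ := cd2_parts h.smooth
  have hder : deriv (zW W a b) = fun x => Real.sqrt (gW W a (zW W a b x)) :=
    funext fun x => (h.zW_hasDeriv x).deriv
  apply cd2_of_parts
  · exact fun x => (h.zW_hasDeriv x).differentiableAt
  · rw [hder]
    exact fun x => (h.zW_hasDeriv2 x).differentiableAt
  · rw [hder]
    have : deriv (fun x => Real.sqrt (gW W a (zW W a b x)))
        = fun x => -(deriv W (zW W a b x)) :=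
      funext fun x => (h.zW_hasDeriv2 x).deriv
    rw [this]
    exact (hd2.continuous.comp h.zW_continuous).neg

lemma zW_tendsto_top : Tendsto (zW W a b) atTop (nhds b) := by
  apply tendsto_order.2
  constructor
  · intro c hc
    rcases le_or_gt c a with hca | hac
    · filter_upwards with x
      exact lt_of_le_of_lt hca (h.zW_mem x).1
    · set z := max c ((a + b) / 2) with hz
      have hzmem : z ∈ Ioo a b :=
        ⟨lt_of_lt_of_le h.mid_mem.1 (le_max_right _ _), max_lt hc h.mid_mem.2⟩
      filter_upwards [eventually_ge_atTop (TW W a b z + 1)] with x hx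
      have hs := h.zW_spec x
      have hlt : z < zW W a b x := by
        have hiff := h.strictMonoOnT.lt_iff_lt hzmem hs.1
        rw [hs.2] at hiff
        exact hiff.mp (by linarith)
      exact lt_of_le_of_lt (le_max_left _ _) hlt
  · intro c hc
    filter_upwards with x
    exact lt_trans (h.zW_mem x).2 hc

lemma zW_tendsto_bot : Tendsto (zW W a b) atBot (nhds a) := by
  apply tendsto_order.2
  constructor
  · intro c hc
    filter_upwards with x
    exact lt_trans hc (h.zW_mem x).1
  · intro c hc
    rcases le_or_gt b c with hbc | hcb
    · filter_upwards with x
      exact lt_of_lt_of_le (h.zW_mem x).2 hbc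
    · set z := min c ((a + b) / 2) with hz
      have hzmem : z ∈ Ioo a b :=
        ⟨lt_min hc h.mid_mem.1, lt_of_le_of_lt (min_le_right _ _) h.mid_mem.2⟩
      filter_upwards [eventually_le_atBot (TW W a b z - 1)] with x hx
      have hs := h.zW_spec x
      have hlt : zW W a b x < z := by
        have hiff := h.strictMonoOnT.lt_iff_lt hs.1 hzmem
        rw [hs.2] at hiff
        exact hiff.mp (by linarith)
      exact lt_of_lt_of_le hlt (min_le_left _ _)

end GoodW

lemma slice_contDiff {V : ℝ × ℝ → ℝ} (hV : ContDiff ℝ 2 V) (lam : ℝ) :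
    ContDiff ℝ 2 (fun z : ℝ => V (z, lam)) :=
  hV.comp (contDiff_id.prodMk contDiff_const)

lemma slice_hasDeriv {V : ℝ × ℝ → ℝ} (hV : ContDiff ℝ 2 V) (lam z : ℝ) :
    HasDerivAt (fun t : ℝ => V (t, lam)) (Vz V z lam) z := by
  have hdiff : DifferentiableAt ℝ V (z, lam) :=
    (hV.differentiable (by norm_num)).differentiableAt
  have hline : HasDerivAt (fun t : ℝ => ((t, lam) : ℝ × ℝ)) ((1 : ℝ), (0 : ℝ)) z :=
    (hasDerivAt_id z).prodMk (hasDerivAt_const z lam)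
  exact hdiff.hasFDerivAt.comp_hasDerivAt z hline

lemma slice_deriv {V : ℝ × ℝ → ℝ} (hV : ContDiff ℝ 2 V) (lam z : ℝ) :
    deriv (fun t : ℝ => V (t, lam)) z = Vz V z lam :=
  (slice_hasDeriv hV lam z).deriv

lemma fderiv_clm_contDiff {V : ℝ × ℝ → ℝ} (hV : ContDiff ℝ 2 V) :
    ContDiff ℝ 1 (fun p : ℝ × ℝ => fderiv ℝ V p (1, 0)) := by
  have h1 : ContDiff ℝ 1 (fun p : ℝ × ℝ => fderiv ℝ V p) :=
    hV.fderiv_right (le_refl _)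
  exact h1.clm_apply contDiff_const

lemma slice_deriv2 {V : ℝ × ℝ → ℝ} (hV : ContDiff ℝ 2 V) (lam z : ℝ) :
    deriv (deriv (fun t : ℝ => V (t, lam))) z = Vzz V z lam := by
  have e1 : deriv (fun t : ℝ => V (t, lam)) = fun t => Vz V t lam :=
    funext fun t => slice_deriv hV lam t
  rw [e1]
  have h1 := fderiv_clm_contDiff hV
  have hdiff : DifferentiableAt ℝ (fun p : ℝ × ℝ => fderiv ℝ V p (1, 0)) (z, lam) :=
    (h1.differentiable one_ne_zero).differentiableAt
  have hline : HasDerivAt (fun t : ℝ => ((t, lam) : ℝ × ℝ)) ((1 : ℝ), (0 : ℝ)) z :=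
    (hasDerivAt_id z).prodMk (hasDerivAt_const z lam)
  exact (hdiff.hasFDerivAt.comp_hasDerivAt z hline).deriv

lemma Tlam_continuousAt
    (V : ℝ × ℝ → ℝ) (hV : ContDiff ℝ 2 V)
    (lam₀ δ : ℝ)
    (Zm Zp : ℝ → ℝ)
    (hZm_cont : ContinuousOn Zm (Ioo (lam₀ - δ) (lam₀ + δ)))
    (hZp_cont : ContinuousOn Zp (Ioo (lam₀ - δ) (lam₀ + δ)))
    (hhetero : ∀ lam ∈ Ioo (lam₀ - δ) (lam₀ + δ),
      ∀ z ∈ Ioo (Zm lam) (Zp lam), V (z, lam) < V (Zm lam, lam))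
    (lamS : ℝ) (hlamS : lamS ∈ Ioo (lam₀ - δ) (lam₀ + δ))
    (z₁ : ℝ) (hz₁ : z₁ ∈ Ioo (Zm lamS) (Zp lamS)) :
    ContinuousAt (fun lam => TW (fun z => V (z, lam)) (Zm lam) (Zp lam) z₁) lamS := by
  set I : Set ℝ := Ioo (lam₀ - δ) (lam₀ + δ) with hIdef
  have hIopen : IsOpen I := isOpen_Ioo
  set aS := Zm lamS with haS
  set bS := Zp lamS with hbS
  set mS := (aS + bS) / 2 with hmS
  have habS : aS < bS := lt_trans hz₁.1 hz₁.2
  have hmS_mem : mS ∈ Ioo aS bS := ⟨by rw [hmS]; linarith, by rw [hmS]; linarith⟩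
  set c := (aS + min z₁ mS) / 2 with hc
  set d := (max z₁ mS + bS) / 2 with hd
  have haSmin : aS < min z₁ mS := lt_min hz₁.1 hmS_mem.1
  have hmaxbS : max z₁ mS < bS := max_lt hz₁.2 hmS_mem.2
  have hac : aS < c := by rw [hc]; linarith
  have hcz : c < min z₁ mS := by rw [hc]; linarith
  have hzd : max z₁ mS < d := by rw [hd]; linarith
  have hdb : d < bS := by rw [hd]; linarith
  have hcd : c < d := lt_trans (lt_of_lt_of_le hcz (min_le_left _ _))
    (lt_of_le_of_lt (le_max_left _ _) hzd)
  have hz₁cd : z₁ ∈ Ioo c d :=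
    ⟨lt_of_lt_of_le hcz (min_le_left _ _), lt_of_le_of_lt (le_max_left _ _) hzd⟩
  have hmScd : mS ∈ Ioo c d :=
    ⟨lt_of_lt_of_le hcz (min_le_right _ _), lt_of_le_of_lt (le_max_right _ _) hzd⟩
  set G : ℝ → ℝ → ℝ := fun lam s => 2 * (V (Zm lam, lam) - V (s, lam)) with hG
  have hKsub : Icc c d ⊆ Ioo aS bS := fun s hs =>
    ⟨lt_of_lt_of_le hac hs.1, lt_of_le_of_lt hs.2 hdb⟩
  have hGpos : ∀ s ∈ Icc c d, 0 < G lamS s := by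
    intro s hs
    have := hhetero lamS hlamS s (hKsub hs)
    rw [hG]; dsimp only; rw [← haS]; linarith
  have hGScont : Continuous (fun s => G lamS s) := by
    apply continuous_const.mul
    exact continuous_const.sub (hV.continuous.comp (continuous_id.prodMk continuous_const))
  obtain ⟨s₀, hs₀K, hmin⟩ := isCompact_Icc.exists_isMinOn
    (Set.nonempty_Icc.mpr hcd.le) hGScont.continuousOn
  set ρ := G lamS s₀ with hρdef
  have hρ : 0 < ρ := hGpos s₀ hs₀K
  have hρle : ∀ s ∈ Icc c d, ρ ≤ G lamS s := fun s hs => hmin hs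
  have hEcontOn : ContinuousOn (fun lam => V (Zm lam, lam)) I :=
    hV.continuous.comp_continuousOn (hZm_cont.prodMk continuousOn_id)
  have hGjoint : ∀ s : ℝ, ContinuousAt (fun p : ℝ × ℝ => G p.1 p.2) (lamS, s) := by
    intro s
    apply ContinuousAt.mul continuousAt_const
    apply ContinuousAt.sub
    · exact ContinuousAt.comp (g := fun lam => V (Zm lam, lam)) (f := Prod.fst)
        (hEcontOn.continuousAt (hIopen.mem_nhds hlamS)) continuousAt_fst
    · exact hV.continuous.continuousAt.comp
        ((continuous_snd.prodMk continuous_fst).continuousAt)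
  have htube : ∀ᶠ lam in nhds lamS, ∀ s ∈ Icc c d, ρ / 2 < G lam s := by
    apply isCompact_Icc.eventually_forall_of_forall_eventually
    intro s hs
    have hgt : ρ / 2 < G lamS s := by linarith [hρle s hs]
    exact (hGjoint s).eventually (eventually_gt_nhds hgt)
  have hm_ev : ∀ᶠ lam in nhds lamS, (Zm lam + Zp lam) / 2 ∈ Ioo c d := by
    have hmc : ContinuousAt (fun lam => (Zm lam + Zp lam) / 2) lamS :=
      (((hZm_cont.continuousAt (hIopen.mem_nhds hlamS)).add
        (hZp_cont.continuousAt (hIopen.mem_nhds hlamS))).div_const 2)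
    exact hmc.preimage_mem_nhds (isOpen_Ioo.mem_nhds hmScd)
  have hI_ev : ∀ᶠ lam in nhds lamS, lam ∈ I := hIopen.mem_nhds hlamS
  have hcomb := (htube.and hm_ev).and hI_ev
  rw [eventually_nhds_iff] at hcomb
  obtain ⟨N, hNprop, hNopen, hlamSN⟩ := hcomb
  have hNsubI : N ⊆ I := fun lam hlam => (hNprop lam hlam).2
  set F : ℝ → ℝ → ℝ := fun lam s => (Real.sqrt (max (G lam s) (ρ / 2)))⁻¹ with hF
  have hE_X : Continuous (fun x : N => V (Zm x.val, x.val)) :=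
    continuousOn_iff_continuous_restrict.mp (hEcontOn.mono hNsubI)
  have hG_X : Continuous (fun q : N × ℝ => G q.1.val q.2) := by
    apply continuous_const.mul
    apply Continuous.sub
    · exact hE_X.comp continuous_fst
    · exact hV.continuous.comp
        (continuous_snd.prodMk (continuous_subtype_val.comp continuous_fst))
  have hmaxpos : ∀ q : N × ℝ, 0 < max (G q.1.val q.2) (ρ / 2) :=
    fun q => lt_of_lt_of_le (half_pos hρ) (le_max_right _ _)
  have hF_X : Continuous (Function.uncurry (fun x : N => fun t : ℝ => F x.val t)) := by
    apply Continuous.inv₀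
    · exact (hG_X.max continuous_const).sqrt
    · exact fun q => ne_of_gt (Real.sqrt_pos.2 (hmaxpos q))
  have hmXcont : Continuous (fun x : N => (Zm x.val + Zp x.val) / 2) := by
    apply Continuous.div_const
    apply Continuous.add
    · exact continuousOn_iff_continuous_restrict.mp ((hZm_cont.mono hNsubI))
    · exact continuousOn_iff_continuous_restrict.mp ((hZp_cont.mono hNsubI))
  have h1 : Continuous fun x : N => ∫ t in c..((Zm x.val + Zp x.val) / 2), F x.val t :=
    intervalIntegral.continuous_parametric_intervalIntegral_of_continuous hF_X hmXcont
  have h2 : Continuous fun x : N => ∫ t in c..z₁, F x.val t :=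
    intervalIntegral.continuous_parametric_intervalIntegral_of_continuous hF_X continuous_const
  have hTmodX : Continuous fun x : N =>
      (∫ t in c..z₁, F x.val t) - ∫ t in c..((Zm x.val + Zp x.val) / 2), F x.val t :=
    h2.sub h1
  have hFlamcont : ∀ lam : ℝ, Continuous (F lam) := by
    intro lam
    apply Continuous.inv₀
    · apply Continuous.sqrt
      apply Continuous.max _ continuous_const
      exact continuous_const.mul (continuous_const.sub
        (hV.continuous.comp (continuous_id.prodMk continuous_const)))
    · intro s
      apply ne_of_gt (Real.sqrt_pos.2 _)
      exact lt_of_lt_of_le (half_pos hρ) (le_max_right _ _)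
  have hEqOn : ∀ lam ∈ N, TW (fun z => V (z, lam)) (Zm lam) (Zp lam) z₁
      = (∫ t in c..z₁, F lam t) - ∫ t in c..((Zm lam + Zp lam) / 2), F lam t := by
    intro lam hlam
    obtain ⟨⟨htub, hmmem⟩, hlamI⟩ := hNprop lam hlam
    set m := (Zm lam + Zp lam) / 2 with hm
    have hint1 : IntervalIntegrable (F lam) MeasureTheory.volume c m :=
      (hFlamcont lam).intervalIntegrable c m
    have hint2 : IntervalIntegrable (F lam) MeasureTheory.volume m z₁ :=
      (hFlamcont lam).intervalIntegrable m z₁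
    have hadj := intervalIntegral.integral_add_adjacent_intervals hint1 hint2
    have step1 : (∫ t in c..z₁, F lam t) - (∫ t in c..m, F lam t)
        = ∫ t in m..z₁, F lam t := by linarith
    rw [step1]
    have huIcc : uIcc m z₁ ⊆ Icc c d :=
      Set.ordConnected_Icc.uIcc_subset (Ioo_subset_Icc_self hmmem) (Ioo_subset_Icc_self hz₁cd)
    have hcongr : (∫ t in m..z₁, F lam t)
        = ∫ t in m..z₁, (Real.sqrt (G lam t))⁻¹ := by
      apply intervalIntegral.integral_congr
      intro s hs
      have hts := htub s (huIcc hs)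
      rw [hF]
      dsimp only
      rw [max_eq_left hts.le]
    rw [hcongr]
    rfl
  have hcontOn : ContinuousOn (fun lam =>
      (∫ t in c..z₁, F lam t) - ∫ t in c..((Zm lam + Zp lam) / 2), F lam t) N :=
    continuousOn_iff_continuous_restrict.mpr hTmodX
  have hTWcont : ContinuousOn
      (fun lam => TW (fun z => V (z, lam)) (Zm lam) (Zp lam) z₁) N :=
    hcontOn.congr (fun lam hlam => hEqOn lam hlam)
  exact hTWcont.continuousAt (hNopen.mem_nhds hlamSN)

/-- **Local curve of heteroclinic fronts.** Given a `C²` family of conjugate,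
nondegenerate pairs of rest points `Z₋(λ) < Z₊(λ)` for `λ` near `λ₀`, there is a
family of strictly increasing heteroclinic fronts of `ζ″ + V_z(ζ, λ) = 0`,
normalized at `x = 0`, depending continuously on `(λ, x)`. -/
theorem local_curve_of_fronts (V : ℝ × ℝ → ℝ) (hV : ContDiff ℝ 2 V)
    (lam₀ δ : ℝ) (hδ : 0 < δ)
    (Zm Zp : ℝ → ℝ)
    (hZm_cont : ContinuousOn Zm (Ioo (lam₀ - δ) (lam₀ + δ)))
    (hZp_cont : ContinuousOn Zp (Ioo (lam₀ - δ) (lam₀ + δ)))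
    (hlt : ∀ lam ∈ Ioo (lam₀ - δ) (lam₀ + δ), Zm lam < Zp lam)
    (hrest_m : ∀ lam ∈ Ioo (lam₀ - δ) (lam₀ + δ), Vz V (Zm lam) lam = 0)
    (hrest_p : ∀ lam ∈ Ioo (lam₀ - δ) (lam₀ + δ), Vz V (Zp lam) lam = 0)
    (hconj : ∀ lam ∈ Ioo (lam₀ - δ) (lam₀ + δ), V (Zm lam, lam) = V (Zp lam, lam))
    (hhetero : ∀ lam ∈ Ioo (lam₀ - δ) (lam₀ + δ),
      ∀ z ∈ Ioo (Zm lam) (Zp lam), V (z, lam) < V (Zm lam, lam))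
    (hspec_m : ∀ lam ∈ Ioo (lam₀ - δ) (lam₀ + δ), Vzz V (Zm lam) lam < 0)
    (hspec_p : ∀ lam ∈ Ioo (lam₀ - δ) (lam₀ + δ), Vzz V (Zp lam) lam < 0) :
    ∃ ζ : ℝ → ℝ → ℝ,
      (∀ lam ∈ Ioo (lam₀ - δ) (lam₀ + δ),
        StrictMono (ζ lam) ∧ ContDiff ℝ 2 (ζ lam) ∧
        (∀ x : ℝ, deriv (deriv (ζ lam)) x + Vz V (ζ lam x) lam = 0) ∧
        Tendsto (ζ lam) atBot (nhds (Zm lam)) ∧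
        Tendsto (ζ lam) atTop (nhds (Zp lam)) ∧
        ζ lam 0 = (Zm lam + Zp lam) / 2) ∧
      ContinuousOn (fun q : ℝ × ℝ => ζ q.1 q.2)
        (Ioo (lam₀ - δ) (lam₀ + δ) ×ˢ (univ : Set ℝ)) := by
  have hIopen : IsOpen (Ioo (lam₀ - δ) (lam₀ + δ)) := isOpen_Ioo
  have hgood : ∀ lam ∈ Ioo (lam₀ - δ) (lam₀ + δ),
      GoodW (fun z => V (z, lam)) (Zm lam) (Zp lam) := by
    intro lam hl
    refine ⟨slice_contDiff hV lam, hlt lam hl, ?_, ?_, hconj lam hl, hhetero lam hl, ?_, ?_⟩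
    · rw [slice_deriv hV]; exact hrest_m lam hl
    · rw [slice_deriv hV]; exact hrest_p lam hl
    · rw [slice_deriv2 hV]; exact hspec_m lam hl
    · rw [slice_deriv2 hV]; exact hspec_p lam hl
  refine ⟨fun lam => zW (fun z => V (z, lam)) (Zm lam) (Zp lam), ?_, ?_⟩
  · intro lam hl
    have h := hgood lam hl
    refine ⟨h.zW_strictMono, h.zW_contDiff, ?_, h.zW_tendsto_bot, h.zW_tendsto_top, h.zW_zero⟩
    intro x
    have hode := h.zW_ode x
    rw [hode, slice_deriv hV]
    ring
  · intro q hq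
    have hl1 : q.1 ∈ Ioo (lam₀ - δ) (lam₀ + δ) := hq.1
    apply ContinuousAt.continuousWithinAt
    have hS := hgood q.1 hl1
    have hz0spec := hS.zW_spec q.2
    set z0 := zW (fun z => V (z, q.1)) (Zm q.1) (Zp q.1) q.2 with hz0def
    have hE1 : ∀ᶠ p : ℝ × ℝ in nhds q, p.1 ∈ Ioo (lam₀ - δ) (lam₀ + δ) :=
      eventually_of_mem ((hIopen.preimage continuous_fst).mem_nhds hl1) (fun p hp => hp)
    have hZmAt : ContinuousAt (fun p : ℝ × ℝ => Zm p.1) q :=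
      (hZm_cont.continuousAt (hIopen.mem_nhds hl1)).comp continuousAt_fst
    have hZpAt : ContinuousAt (fun p : ℝ × ℝ => Zp p.1) q :=
      (hZp_cont.continuousAt (hIopen.mem_nhds hl1)).comp continuousAt_fst
    apply tendsto_order.2
    constructor
    · intro cc hcc
      set z₁ := max cc ((Zm q.1 + z0) / 2) with hz₁def
      have hmid : (Zm q.1 + z0) / 2 ∈ Ioo (Zm q.1) z0 :=
        ⟨by linarith [hz0spec.1.1], by linarith [hz0spec.1.1]⟩
      have hz₁ : z₁ ∈ Ioo (Zm q.1) z0 :=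
        ⟨lt_of_lt_of_le hmid.1 (le_max_right _ _), max_lt hcc hmid.2⟩
      have hz₁Ioo : z₁ ∈ Ioo (Zm q.1) (Zp q.1) := ⟨hz₁.1, lt_trans hz₁.2 hz0spec.1.2⟩
      have hTq : TW (fun z => V (z, q.1)) (Zm q.1) (Zp q.1) z₁ < q.2 := by
        have := hS.strictMonoOnT hz₁Ioo hz0spec.1 hz₁.2
        rwa [hz0spec.2] at this
      have hTat : ContinuousAt
          (fun p : ℝ × ℝ => TW (fun z => V (z, p.1)) (Zm p.1) (Zp p.1) z₁) q :=
        (Tlam_continuousAt V hV lam₀ δ Zm Zp hZm_cont hZp_cont hhetero q.1 hl1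
          z₁ hz₁Ioo).comp continuousAt_fst
      have hE2 : ∀ᶠ p : ℝ × ℝ in nhds q, Zm p.1 < z₁ :=
        hZmAt.eventually_lt continuousAt_const hz₁.1
      have hE3 : ∀ᶠ p : ℝ × ℝ in nhds q, z₁ < Zp p.1 :=
        ContinuousAt.eventually_lt continuousAt_const hZpAt hz₁Ioo.2
      have hE4 : ∀ᶠ p : ℝ × ℝ in nhds q,
          TW (fun z => V (z, p.1)) (Zm p.1) (Zp p.1) z₁ < p.2 :=
        hTat.eventually_lt continuousAt_snd hTq
      filter_upwards [hE1, hE2, hE3, hE4] with p h1 h2 h3 h4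
      have hp := hgood p.1 h1
      have hspec := hp.zW_spec p.2
      have hz₁p : z₁ ∈ Ioo (Zm p.1) (Zp p.1) := ⟨h2, h3⟩
      have hlt' : z₁ < zW (fun z => V (z, p.1)) (Zm p.1) (Zp p.1) p.2 := by
        have hiff := hp.strictMonoOnT.lt_iff_lt hz₁p hspec.1
        rw [hspec.2] at hiff
        exact hiff.mp h4
      exact lt_of_le_of_lt (le_max_left _ _) hlt'
    · intro cc hcc
      set z₂ := min cc ((z0 + Zp q.1) / 2) with hz₂def
      have hmid : (z0 + Zp q.1) / 2 ∈ Ioo z0 (Zp q.1) :=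
        ⟨by linarith [hz0spec.1.2], by linarith [hz0spec.1.2]⟩
      have hz₂ : z₂ ∈ Ioo z0 (Zp q.1) :=
        ⟨lt_min hcc hmid.1, lt_of_le_of_lt (min_le_right _ _) hmid.2⟩
      have hz₂Ioo : z₂ ∈ Ioo (Zm q.1) (Zp q.1) := ⟨lt_trans hz0spec.1.1 hz₂.1, hz₂.2⟩
      have hTq : q.2 < TW (fun z => V (z, q.1)) (Zm q.1) (Zp q.1) z₂ := by
        have := hS.strictMonoOnT hz0spec.1 hz₂Ioo hz₂.1
        rwa [hz0spec.2] at this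
      have hTat : ContinuousAt
          (fun p : ℝ × ℝ => TW (fun z => V (z, p.1)) (Zm p.1) (Zp p.1) z₂) q :=
        (Tlam_continuousAt V hV lam₀ δ Zm Zp hZm_cont hZp_cont hhetero q.1 hl1
          z₂ hz₂Ioo).comp continuousAt_fst
      have hE2 : ∀ᶠ p : ℝ × ℝ in nhds q, Zm p.1 < z₂ :=
        hZmAt.eventually_lt continuousAt_const hz₂Ioo.1
      have hE3 : ∀ᶠ p : ℝ × ℝ in nhds q, z₂ < Zp p.1 :=
        ContinuousAt.eventually_lt continuousAt_const hZpAt hz₂.2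
      have hE4 : ∀ᶠ p : ℝ × ℝ in nhds q,
          p.2 < TW (fun z => V (z, p.1)) (Zm p.1) (Zp p.1) z₂ :=
        ContinuousAt.eventually_lt continuousAt_snd hTat hTq
      filter_upwards [hE1, hE2, hE3, hE4] with p h1 h2 h3 h4
      have hp := hgood p.1 h1
      have hspec := hp.zW_spec p.2
      have hz₂p : z₂ ∈ Ioo (Zm p.1) (Zp p.1) := ⟨h2, h3⟩
      have hlt' : zW (fun z => V (z, p.1)) (Zm p.1) (Zp p.1) p.2 < z₂ := by
        have hiff := hp.strictMonoOnT.lt_iff_lt hspec.1 hz₂p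
        rw [hspec.2] at hiff
        exact hiff.mp h4
      exact lt_of_lt_of_le hlt' (min_le_left _ _)
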